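/- For a subadditive function f : (0,∞) → [0,∞] satisfying f(uv) ≤ f(u) + f(v) for all u,v > 0, if f(u) < ∞ for almost every u > 0, then f(2) < ∞. -/
import Mathlib

open MeasureTheory Set

theorem subadditive_ae_finite_at_two (f : ℝ → ENNReal)
    (hsub : ∀ u v : ℝ, 0 < u → 0 < v → f (u * v) ≤ f u + f v)
    (hae : volume {u : ℝ | u ∈ Ioi (0:ℝ) ∧ f u = ⊤} = 0) :
    f 2 ≠ ⊤ := by
  set N : Set ℝ := {u : ℝ | u ∈ Ioi (0:ℝ) ∧ f u = ⊤} with hN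
  have hdiff : DifferentiableOn ℝ (fun u : ℝ => 2 / u) N := by
    intro x hx
    exact (differentiableAt_const (2:ℝ)).div differentiableAt_id (ne_of_gt hx.1) |>.differentiableWithinAt
  have himg : volume ((fun u : ℝ => 2 / u) '' N) = 0 :=
    addHaar_image_eq_zero_of_differentiableOn_of_addHaar_eq_zero volume hdiff hae
  -- Ioi 0 is not contained in the union of the two null sets
  have hne : (Ioi (0:ℝ) \ (N ∪ (fun u : ℝ => 2 / u) '' N)).Nonempty := by
    by_contra h
    rw [not_nonempty_iff_eq_empty, diff_eq_empty] at h
    have : volume (Ioi (0:ℝ)) = 0 := by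
      exact measure_mono_null h (measure_union_null hae himg)
    simp [Real.volume_Ioi] at this
  obtain ⟨u, hu0, hu⟩ := hne
  simp only [mem_union, not_or] at hu
  have hu0' : (0:ℝ) < u := hu0
  have hv0 : (0:ℝ) < 2 / u := by positivity
  have hfu : f u ≠ ⊤ := fun h => hu.1 ⟨hu0, h⟩
  have hfv : f (2 / u) ≠ ⊤ := by
    intro h
    exact hu.2 ⟨2 / u, ⟨hv0, h⟩, by field_simp⟩
  have h2 : u * (2 / u) = 2 := by field_simp
  have := hsub u (2 / u) hu0' hv0
  rw [h2] at this
  exact ne_top_of_le_ne_top (ENNReal.add_ne_top.mpr ⟨hfu, hfv⟩) this
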